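/- Let E₁ : [0,∞) → ℂ be a function satisfying ∫₀ˣ |E₁(t)|/t² dt < +∞ for all x ≥ 0. Then the function F₂(x) = E₁(x) + x·∫₀ˣ E₁(t)/t² dt is well-defined on [0,∞), satisfies the Volterra integral equation of second type F₂(x) − ∫₀ˣ F₂(t)/t dt = E₁(x) for all x ≥ 0, and satisfies ∫₀ˣ |F₂(t)|/t dt < +∞ for all x ≥ 0. -/

import Mathlib

open Filter MeasureTheory Set

lemma fubini_aux (x : ℝ) (hx : 0 ≤ x) (g : ℝ → ℂ)
    (hg : IntegrableOn g (Ioc 0 x)) :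
    (∫ t in Ioc (0:ℝ) x, (∫ s in Ioc (0:ℝ) t, g s))
      = ∫ s in Ioc (0:ℝ) x, ((x - s : ℝ)) • g s := by
  set μ := volume.restrict (Ioc (0:ℝ) x) with hμ
  have hgμ : Integrable g μ := hg
  have hfin : IsFiniteMeasure μ := by
    constructor
    rw [hμ, Measure.restrict_apply_univ, Real.volume_Ioc]
    exact ENNReal.ofReal_lt_top
  set F : ℝ → ℝ → ℂ := fun t s => (Ioc (0:ℝ) t).indicator g s with hF
  have hFeq : Function.uncurry F
      = {p : ℝ × ℝ | 0 < p.2 ∧ p.2 ≤ p.1}.indicator (fun p => g p.2) := by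
    funext p
    simp only [Function.uncurry, hF, Set.indicator_apply, Set.mem_Ioc, Set.mem_setOf_eq]
  have hS : MeasurableSet {p : ℝ × ℝ | 0 < p.2 ∧ p.2 ≤ p.1} := by
    apply MeasurableSet.inter
    · exact measurableSet_lt measurable_const measurable_snd
    · exact measurableSet_le measurable_snd measurable_fst
  have hFm : AEStronglyMeasurable (Function.uncurry F) (μ.prod μ) := by
    rw [hFeq]
    exact (hgμ.aestronglyMeasurable.comp_snd).indicator hS
  -- inner t-slices
  have hslice : ∀ t : ℝ, Integrable (fun s => F t s) μ :=
    fun t => hgμ.indicator measurableSet_Ioc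
  -- the norm integral function is monotone, hence measurable
  have hmono : Monotone (fun t => ∫ s, ‖F t s‖ ∂μ) := by
    intro t t' htt'
    apply integral_mono (hslice t).norm (hslice t').norm
    intro s
    simp only [hF, norm_indicator_eq_indicator_norm]
    exact Set.indicator_le_indicator_of_subset (Ioc_subset_Ioc le_rfl htt')
      (fun s => norm_nonneg _) s
  have hFi : Integrable (Function.uncurry F) (μ.prod μ) := by
    rw [integrable_prod_iff hFm]
    constructor
    · exact Eventually.of_forall hslice
    · apply Integrable.mono' (integrable_const (∫ s, ‖g s‖ ∂μ))
        (hmono.measurable.aestronglyMeasurable)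
      apply Eventually.of_forall
      intro t
      rw [Real.norm_eq_abs, abs_of_nonneg (integral_nonneg (fun s => norm_nonneg _))]
      apply integral_mono (hslice t).norm hgμ.norm
      intro s
      simp only [hF, norm_indicator_eq_indicator_norm]
      by_cases h : s ∈ Ioc (0:ℝ) t
      · simp [Set.indicator_of_mem h]
      · simp [Set.indicator_of_notMem h, norm_nonneg]
  have hswap := integral_integral_swap hFi
  -- LHS matches
  have hL : (∫ t in Ioc (0:ℝ) x, (∫ s in Ioc (0:ℝ) t, g s))
      = ∫ t, ∫ s, F t s ∂μ ∂μ := by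
    apply setIntegral_congr_fun measurableSet_Ioc
    intro t ht
    simp only [hF]
    rw [integral_indicator measurableSet_Ioc, hμ, Measure.restrict_restrict measurableSet_Ioc,
      Set.inter_eq_left.mpr (Ioc_subset_Ioc le_rfl ht.2)]
  -- RHS
  have hR : (∫ s, ∫ t, F t s ∂μ ∂μ) = ∫ s in Ioc (0:ℝ) x, ((x - s : ℝ)) • g s := by
    apply setIntegral_congr_fun measurableSet_Ioc
    intro s hs
    have h1 : (fun t => F t s) = (Ici s).indicator (fun _ => g s) := by
      funext t
      simp only [hF, Set.indicator_apply, Set.mem_Ioc, Set.mem_Ici]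
      by_cases h : s ≤ t
      · simp [h, hs.1]
      · simp [h, fun h' : 0 < s ∧ s ≤ t => h h'.2]
    simp only []
    rw [h1, integral_indicator_const _ measurableSet_Ici, hμ, measureReal_def,
      Measure.restrict_apply measurableSet_Ici]
    have h2 : Ici s ∩ Ioc 0 x = Icc s x := by
      ext t
      simp only [Set.mem_inter_iff, Set.mem_Ici, Set.mem_Ioc, Set.mem_Icc]
      constructor
      · rintro ⟨h3, _, h5⟩; exact ⟨h3, h5⟩
      · rintro ⟨h3, h4⟩; exact ⟨h3, lt_of_lt_of_le hs.1 h3, h4⟩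
    rw [h2, Real.volume_Icc, ENNReal.toReal_ofReal (by linarith [hs.2] : (0:ℝ) ≤ x - s)]
  rw [hL, hswap, hR]

theorem stmt_9
    (E₁ : ℝ → ℂ)
    (hE : ∀ x : ℝ, 0 ≤ x →
      IntegrableOn (fun t => E₁ t / (t : ℂ) ^ 2) (Set.Ioc 0 x))
    (F₂ : ℝ → ℂ)
    (hF₂ : ∀ x : ℝ, 0 ≤ x →
      F₂ x = E₁ x + (x : ℂ) * ∫ t in Set.Ioc (0:ℝ) x, E₁ t / (t : ℂ) ^ 2) :
    ∀ x : ℝ, 0 ≤ x →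
      IntegrableOn (fun t => F₂ t / (t : ℂ)) (Set.Ioc 0 x) ∧
      F₂ x - (∫ t in Set.Ioc (0:ℝ) x, F₂ t / (t : ℂ)) = E₁ x := by
  intro x hx
  set g : ℝ → ℂ := fun t => E₁ t / (t : ℂ) ^ 2 with hgdef
  have hg : IntegrableOn g (Ioc 0 x) := hE x hx
  set G : ℝ → ℂ := fun t => ∫ s in Ioc (0:ℝ) t, g s with hGdef
  -- key pointwise identity
  have key : ∀ t : ℝ, t ≠ 0 → E₁ t / (t : ℂ) = (t : ℝ) • g t := by
    intro t ht
    have ht' : (t : ℂ) ≠ 0 := by exact_mod_cast ht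
    simp only [hgdef, Complex.real_smul]
    field_simp
  -- integrability of t • g t on Ioc 0 x
  have h1 : IntegrableOn (fun t => (t : ℝ) • g t) (Ioc 0 x) := by
    apply Integrable.mono' (hg.norm.const_mul x)
      ((measurable_id.aestronglyMeasurable).smul hg.aestronglyMeasurable)
    filter_upwards [ae_restrict_mem measurableSet_Ioc] with t ht
    show ‖t • g t‖ ≤ x * ‖g t‖
    rw [norm_smul, Real.norm_eq_abs, abs_of_pos ht.1]
    exact mul_le_mul_of_nonneg_right ht.2 (norm_nonneg _)
  -- integrability of G on Ioc 0 x via continuity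
  have hgIcc : IntegrableOn g (Icc 0 x) := by
    rwa [integrableOn_Icc_iff_integrableOn_Ioc]
  have hGcont : ContinuousOn G (Icc 0 x) := by
    exact intervalIntegral.continuousOn_primitive hgIcc
  have hGint : IntegrableOn G (Ioc 0 x) :=
    (hGcont.integrableOn_Icc).mono_set Ioc_subset_Icc_self
  -- pointwise equation for F₂ t / t on Ioc 0 x
  have heq : EqOn (fun t => F₂ t / (t : ℂ)) (fun t => (t : ℝ) • g t + G t) (Ioc 0 x) := by
    intro t ht
    have ht0 : (0:ℝ) ≤ t := ht.1.le
    have htne : (t : ℂ) ≠ 0 := by exact_mod_cast ht.1.ne'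
    show F₂ t / (t : ℂ) = (t : ℝ) • g t + G t
    rw [hF₂ t ht0, add_div, mul_div_cancel_left₀ _ htne, key t ht.1.ne']
  have hint : IntegrableOn (fun t => F₂ t / (t : ℂ)) (Ioc 0 x) := by
    apply (h1.add hGint).congr
    filter_upwards [ae_restrict_mem measurableSet_Ioc] with t ht
    exact (heq ht).symm
  refine ⟨hint, ?_⟩
  have hIG : (∫ t in Ioc (0:ℝ) x, G t)
      = (x : ℝ) • (∫ s in Ioc (0:ℝ) x, g s) - ∫ s in Ioc (0:ℝ) x, (s : ℝ) • g s := by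
    have h := fubini_aux x hx g hg
    have h2 : (∫ s in Ioc (0:ℝ) x, ((x - s : ℝ)) • g s)
        = ((x : ℝ) • ∫ s in Ioc (0:ℝ) x, g s) - ∫ s in Ioc (0:ℝ) x, (s : ℝ) • g s := by
      have hxg : IntegrableOn (fun a : ℝ => (x : ℝ) • g a) (Ioc 0 x) := hg.smul x
      rw [← integral_smul, ← integral_sub hxg h1]
      apply setIntegral_congr_fun measurableSet_Ioc
      intro s _
      exact sub_smul _ _ _
    exact h.trans h2
  have hIF : (∫ t in Ioc (0:ℝ) x, F₂ t / (t : ℂ)) = (x : ℝ) • ∫ s in Ioc (0:ℝ) x, g s := by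
    rw [setIntegral_congr_fun measurableSet_Ioc heq, integral_add h1 hGint, hIG]
    abel
  rw [hIF, hF₂ x hx, ← hgdef, Complex.real_smul]
  ring
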